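/- Let f : ℝ^d → ℝ ∪ {+∞} be convex and symmetric (invariant under coordinate permutations), and let λ : S^d → ℝ^d map a symmetric matrix to its eigenvalues in nonincreasing order. Then the spectral function f ∘ λ : S^d → ℝ ∪ {+∞} is convex. -/

import Mathlib

open Matrix

/-- A convex combination (with real coefficients) of EReals bounded by `M` is bounded by `M`. -/
lemma ereal_combo_le {a b : ℝ} (ha : 0 ≤ a) (hb : 0 ≤ b) (hab : a + b = 1)
    {p q M : EReal} (hp : p ≤ M) (hq : q ≤ M) :
    (a : EReal) * p + (b : EReal) * q ≤ M := by
  induction M with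
  | bot =>
    rw [le_bot_iff] at hp hq
    subst hp; subst hq
    rcases eq_or_lt_of_le ha with h | h
    · have hb1 : b = 1 := by linarith
      rw [← h, hb1]
      simp [EReal.zero_mul]
    · rw [EReal.coe_mul_bot_of_pos h, EReal.bot_add]
  | coe m =>
    have h1 : (a : EReal) * p ≤ (a : EReal) * (m : EReal) :=
      mul_le_mul_of_nonneg_left hp (by exact_mod_cast ha)
    have h2 : (b : EReal) * q ≤ (b : EReal) * (m : EReal) :=
      mul_le_mul_of_nonneg_left hq (by exact_mod_cast hb)
    calc (a : EReal) * p + (b : EReal) * q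
        ≤ (a : EReal) * (m : EReal) + (b : EReal) * (m : EReal) := add_le_add h1 h2
      _ = (((a * m + b * m : ℝ)) : EReal) := by
          rw [EReal.coe_add, EReal.coe_mul, EReal.coe_mul]
      _ = (m : EReal) := by rw [show a * m + b * m = m by rw [← add_mul, hab, one_mul]]
  | top => exact le_top

/-- The sublevel sets of a "convex" `EReal`-valued function are convex. -/
lemma convex_sublevel {d : ℕ} (f : (Fin d → ℝ) → EReal)
    (hconv : ∀ (a b : Fin d → ℝ) (t : ℝ), 0 ≤ t → t ≤ 1 →
        f (t • a + (1 - t) • b) ≤ (t : EReal) * f a + ((1 - t : ℝ) : EReal) * f b)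
    (M : EReal) : Convex ℝ {x : Fin d → ℝ | f x ≤ M} := by
  intro x hx y hy a b ha hb hab
  have hb' : b = 1 - a := by linarith
  have h1 : f (a • x + (1 - a) • y) ≤ (a : EReal) * f x + ((1 - a : ℝ) : EReal) * f y :=
    hconv x y a ha (by linarith)
  rw [hb']
  exact h1.trans (ereal_combo_le ha (by linarith) (by ring) hx hy)

lemma permMatrix_mulVec {d : ℕ} (σ : Equiv.Perm (Fin d)) (v : Fin d → ℝ) :
    σ.permMatrix ℝ *ᵥ v = v ∘ σ := by
  ext i
  simp [Matrix.mulVec, dotProduct, Equiv.Perm.permMatrix, PEquiv.toMatrix_apply,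
    Equiv.toPEquiv_apply]

/-- Key lemma: for a Hermitian real matrix `A` and orthogonal `U`, the value of a
symmetric convex function at the diagonal of `star U * A * U` is at most its value at
the eigenvalues of `A`. -/
lemma key_diag_le {d : ℕ} (f : (Fin d → ℝ) → EReal)
    (hconv : ∀ (a b : Fin d → ℝ) (t : ℝ), 0 ≤ t → t ≤ 1 →
        f (t • a + (1 - t) • b) ≤ (t : EReal) * f a + ((1 - t : ℝ) : EReal) * f b)
    (hsymm : ∀ (σ : Equiv.Perm (Fin d)) (v : Fin d → ℝ), f (v ∘ σ) = f v)
    (A : Matrix (Fin d) (Fin d) ℝ) (hA : A.IsHermitian)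
    (U : Matrix (Fin d) (Fin d) ℝ) (hU : U ∈ Matrix.unitaryGroup (Fin d) ℝ) :
    f (fun k => (star U * A * U) k k) ≤ f hA.eigenvalues := by
  set v := hA.eigenvalues with hv
  set V : Matrix (Fin d) (Fin d) ℝ := (hA.eigenvectorUnitary : Matrix (Fin d) (Fin d) ℝ)
    with hVdef
  set W : Matrix (Fin d) (Fin d) ℝ := star U * V with hWdef
  have hW : W ∈ Matrix.unitaryGroup (Fin d) ℝ :=
    mul_mem (Unitary.star_mem hU) hA.eigenvectorUnitary.2
  have hWW : W * star W = 1 := (Matrix.mem_unitaryGroup_iff).mp hW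
  have hWW' : star W * W = 1 := (Matrix.mem_unitaryGroup_iff').mp hW
  -- star U * A * U = W * diagonal v * star W
  have hspec : star U * A * U = W * Matrix.diagonal v * star W := by
    have h0 : A = V * Matrix.diagonal v * star V := by
      have := hA.spectral_theorem
      simpa [RCLike.ofReal_real_eq_id] using this
    calc star U * A * U = star U * (V * Matrix.diagonal v * star V) * U := by rw [← h0]
      _ = (star U * V) * Matrix.diagonal v * (star V * U) := by
          simp only [Matrix.mul_assoc]
      _ = W * Matrix.diagonal v * star W := by
          rw [hWdef, StarMul.star_mul, star_star]
  -- diagonal entries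
  have hdiag : ∀ k, (star U * A * U) k k = ∑ j, (W k j) ^ 2 * v j := by
    intro k
    rw [hspec]
    rw [Matrix.mul_apply]
    congr 1
    ext j
    rw [Matrix.mul_diagonal]
    have : star W j k = W k j := by
      simp [Matrix.star_eq_conjTranspose, Matrix.conjTranspose_apply]
    rw [this]
    ring
  -- the doubly stochastic matrix
  set S : Matrix (Fin d) (Fin d) ℝ := Matrix.of (fun k j => (W k j) ^ 2) with hSdef
  have hS : S ∈ doublyStochastic ℝ (Fin d) := by
    rw [mem_doublyStochastic_iff_sum]
    refine ⟨fun i j => sq_nonneg _, fun i => ?_, fun j => ?_⟩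
    · have := congrFun (congrFun hWW i) i
      simp only [Matrix.mul_apply, Matrix.one_apply_eq] at this
      rw [← this]
      apply Finset.sum_congr rfl
      intro j _
      simp [Matrix.star_eq_conjTranspose, Matrix.conjTranspose_apply, hSdef, sq]
    · have := congrFun (congrFun hWW' j) j
      simp only [Matrix.mul_apply, Matrix.one_apply_eq] at this
      rw [← this]
      apply Finset.sum_congr rfl
      intro i _
      simp [Matrix.star_eq_conjTranspose, Matrix.conjTranspose_apply, hSdef, sq]
  -- the diagonal equals S *ᵥ v
  have hdv : (fun k => (star U * A * U) k k) = S *ᵥ v := by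
    funext k
    rw [hdiag k]
    simp [Matrix.mulVec, dotProduct, hSdef]
  -- Birkhoff decomposition
  obtain ⟨w, hw0, hw1, hwS⟩ := exists_eq_sum_perm_of_mem_doublyStochastic hS
  have hcomb : S *ᵥ v = ∑ σ : Equiv.Perm (Fin d), w σ • (v ∘ σ) := by
    rw [← hwS]
    let L : Matrix (Fin d) (Fin d) ℝ →ₗ[ℝ] (Fin d → ℝ) :=
      { toFun := fun M => M *ᵥ v
        map_add' := fun A B => Matrix.add_mulVec A B v
        map_smul' := fun c A => Matrix.smul_mulVec c A v }
    show L (∑ σ : Equiv.Perm (Fin d), w σ • σ.permMatrix ℝ)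
        = ∑ σ : Equiv.Perm (Fin d), w σ • (v ∘ σ)
    rw [map_sum]
    apply Finset.sum_congr rfl
    intro σ _
    rw [_root_.map_smul]
    show w σ • (σ.permMatrix ℝ *ᵥ v) = _
    rw [_root_.permMatrix_mulVec]
  -- convexity argument
  have hC : Convex ℝ {x : Fin d → ℝ | f x ≤ f v} := convex_sublevel f hconv (f v)
  have hmem : (S *ᵥ v) ∈ {x : Fin d → ℝ | f x ≤ f v} := by
    rw [hcomb]
    apply hC.sum_mem (fun σ _ => hw0 σ) hw1
    intro σ _
    exact le_of_eq (hsymm σ v)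
  rw [hdv]
  exact hmem

/-- If `f : ℝ^d → ℝ ∪ {+∞}` is convex and symmetric (invariant under
coordinate permutations), then the spectral function `f ∘ λ`, where `λ` maps a
symmetric matrix to its eigenvalues sorted in nonincreasing order, is convex on the
symmetric matrices. -/
theorem spectral_function_convex {d : ℕ}
    (f : (Fin d → ℝ) → EReal)
    (hconv : ∀ (a b : Fin d → ℝ) (t : ℝ), 0 ≤ t → t ≤ 1 →
        f (t • a + (1 - t) • b) ≤ (t : EReal) * f a + ((1 - t : ℝ) : EReal) * f b)
    (hsymm : ∀ (σ : Equiv.Perm (Fin d)) (v : Fin d → ℝ), f (v ∘ σ) = f v)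
    (X Y : Matrix (Fin d) (Fin d) ℝ) (hX : X.IsHermitian) (hY : Y.IsHermitian)
    (t : ℝ) (ht0 : 0 ≤ t) (ht1 : t ≤ 1)
    (hZ : (t • X + (1 - t) • Y).IsHermitian)
    -- sorted (nonincreasing) eigenvalue vectors of X, Y and the convex combination
    (lX lY lZ : Fin d → ℝ)
    (hlX : Antitone lX) (hlY : Antitone lY) (hlZ : Antitone lZ)
    (hlX' : ∃ σ : Equiv.Perm (Fin d), lX = hX.eigenvalues ∘ σ)
    (hlY' : ∃ σ : Equiv.Perm (Fin d), lY = hY.eigenvalues ∘ σ)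
    (hlZ' : ∃ σ : Equiv.Perm (Fin d), lZ = hZ.eigenvalues ∘ σ) :
    f lZ ≤ (t : EReal) * f lX + ((1 - t : ℝ) : EReal) * f lY := by
  obtain ⟨σX, hσX⟩ := hlX'
  obtain ⟨σY, hσY⟩ := hlY'
  obtain ⟨σZ, hσZ⟩ := hlZ'
  set Z : Matrix (Fin d) (Fin d) ℝ := t • X + (1 - t) • Y with hZdef
  set U : Matrix (Fin d) (Fin d) ℝ := (hZ.eigenvectorUnitary : Matrix (Fin d) (Fin d) ℝ)
    with hUdef
  have hU : U ∈ Matrix.unitaryGroup (Fin d) ℝ := hZ.eigenvectorUnitary.2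
  -- diagonalization of Z
  have hdiagZ : star U * Z * U = Matrix.diagonal hZ.eigenvalues := by
    have := hZ.conjStarAlgAut_star_eigenvectorUnitary
    simpa [RCLike.ofReal_real_eq_id] using this
  -- diagonal vectors of X and Y in the eigenbasis of Z
  set dX : Fin d → ℝ := fun k => (star U * X * U) k k with hdX
  set dY : Fin d → ℝ := fun k => (star U * Y * U) k k with hdY
  have hsplit : hZ.eigenvalues = t • dX + (1 - t) • dY := by
    funext k
    have h1 : (star U * Z * U) k k = Matrix.diagonal hZ.eigenvalues k k := by rw [hdiagZ]
    rw [Matrix.diagonal_apply_eq] at h1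
    have h2 : star U * Z * U = t • (star U * X * U) + (1 - t) • (star U * Y * U) := by
      rw [hZdef]
      rw [Matrix.mul_add, Matrix.add_mul]
      congr 1 <;> rw [Matrix.mul_smul, Matrix.smul_mul]
    rw [h2] at h1
    simp only [Matrix.add_apply, Matrix.smul_apply, smul_eq_mul] at h1
    simp only [Pi.add_apply, Pi.smul_apply, smul_eq_mul]
    exact h1.symm
  -- f lZ = f (eigenvalues of Z)
  have hfZ : f lZ = f hZ.eigenvalues := by rw [hσZ, hsymm]
  have hfX : f lX = f hX.eigenvalues := by rw [hσX, hsymm]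
  have hfY : f lY = f hY.eigenvalues := by rw [hσY, hsymm]
  have hkeyX : f dX ≤ f lX := by
    rw [hfX]; exact key_diag_le f hconv hsymm X hX U hU
  have hkeyY : f dY ≤ f lY := by
    rw [hfY]; exact key_diag_le f hconv hsymm Y hY U hU
  have hmain : f lZ ≤ (t : EReal) * f dX + ((1 - t : ℝ) : EReal) * f dY := by
    rw [hfZ, hsplit]
    exact hconv dX dY t ht0 ht1
  refine hmain.trans (add_le_add ?_ ?_)
  · exact mul_le_mul_of_nonneg_left hkeyX (by exact_mod_cast ht0)
  · exact mul_le_mul_of_nonneg_left hkeyY (by exact_mod_cast (by linarith : (0:ℝ) ≤ 1 - t))
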